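/- arXiv:2511.15816 — 5 statements merged into one kernel-verified Lean document; each statement's English description precedes it below -/
import Mathlib

section
/- Let (Ω, P) be a probability space, let f : Ω → ℝ be a measurable nonnegative integrable function, and let B > 0 and α ∈ (0,1). Suppose that for every t > 0, P{ω : 0 < f(ω) ≤ t} ≤ B · t^{α/(1−α)} (the Model Margin noise tail condition). Then P{ω : f(ω) > 0} ≤ (B^{1−α} / α^α) · (∫_{{f>0}} f dP)^α. -/
open MeasureTheory Real Set

/-- Key MM-noise property (Lemma 4.3): under the Model Margin noise tail condition,
the mass of the set where `f > 0` is bounded by a power of the integral of `f`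
over that set. -/
theorem stmt_0 {Ω : Type*} [MeasurableSpace Ω] (P : Measure Ω) [IsProbabilityMeasure P]
    (f : Ω → ℝ) (hf_meas : Measurable f) (hf_nonneg : ∀ ω, 0 ≤ f ω)
    (hf_int : Integrable f P)
    (B α : ℝ) (hB : 0 < B) (hα : α ∈ Set.Ioo (0 : ℝ) 1)
    (hMM : ∀ t > (0 : ℝ),
      (P {ω | 0 < f ω ∧ f ω ≤ t}).toReal ≤ B * t ^ (α / (1 - α))) :
    (P {ω | 0 < f ω}).toReal ≤
      (B ^ (1 - α) / α ^ α) * (∫ ω in {ω | 0 < f ω}, f ω ∂P) ^ α := by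
  obtain ⟨hα0, hα1⟩ := hα
  have h1α : (0:ℝ) < 1 - α := by linarith
  set S : Set Ω := {ω | 0 < f ω} with hS
  set p : ℝ := (P S).toReal with hp
  set I : ℝ := ∫ ω in S, f ω ∂P with hIdef
  set β : ℝ := α / (1 - α) with hβ
  have hβpos : 0 < β := div_pos hα0 h1α
  have hSmeas : MeasurableSet S := measurableSet_lt measurable_const hf_meas
  have hpnn : 0 ≤ p := ENNReal.toReal_nonneg
  have hInn : 0 ≤ I := setIntegral_nonneg hSmeas fun ω _ => hf_nonneg ω
  rcases eq_or_lt_of_le hpnn with hp0 | hp0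
  · rw [← hp0]
    have : (0:ℝ) < B ^ (1 - α) / α ^ α :=
      div_pos (rpow_pos_of_pos hB _) (rpow_pos_of_pos hα0 _)
    exact mul_nonneg this.le (rpow_nonneg hInn _)
  -- I equals the full integral
  have hIeq : I = ∫ ω, f ω ∂P := by
    refine setIntegral_eq_integral_of_forall_compl_eq_zero fun ω hω => ?_
    have := hf_nonneg ω
    simp only [hS, mem_setOf_eq, not_lt] at hω
    linarith
  -- layer cake
  set g : ℝ → ℝ := fun t => (P {a | t < f a}).toReal with hg
  have hlayer : I = ∫ t in Ioi (0:ℝ), g t := by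
    rw [hIeq]
    exact hf_int.integral_eq_integral_meas_lt (Filter.Eventually.of_forall hf_nonneg)
  have g_meas : Measurable g := by
    apply Measurable.ennreal_toReal
    exact Antitone.measurable fun s t hst => measure_mono fun a ha => lt_of_le_of_lt hst ha
  have g_nn : ∀ t, 0 ≤ g t := fun t => ENNReal.toReal_nonneg
  have g_int : IntegrableOn g (Ioi (0:ℝ)) := by
    refine ⟨g_meas.aestronglyMeasurable, ?_⟩
    rw [hasFiniteIntegral_iff_ofReal (Filter.Eventually.of_forall g_nn)]
    have : ∫⁻ t in Ioi (0:ℝ), ENNReal.ofReal (g t) = ∫⁻ t in Ioi (0:ℝ), P {a | t < f a} := by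
      refine setLIntegral_congr_fun measurableSet_Ioi (fun t _ => ?_)
      exact ENNReal.ofReal_toReal (measure_ne_top P _)
    rw [this, ← lintegral_eq_lintegral_meas_lt P (Filter.Eventually.of_forall hf_nonneg)
        hf_int.aemeasurable]
    exact hf_int.lintegral_lt_top
  -- the cutoff
  set T : ℝ := (p / B) ^ ((1 - α) / α) with hT
  have hpB : 0 < p / B := div_pos hp0 hB
  have hTpos : 0 < T := rpow_pos_of_pos hpB _
  -- pointwise lower bound for g on (0, T]
  have g_lb : ∀ t ∈ Ioc (0:ℝ) T, p - B * t ^ β ≤ g t := by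
    intro t ht
    have ht0 : 0 < t := ht.1
    have hsplit : P S = P {ω | 0 < f ω ∧ f ω ≤ t} + P {a | t < f a} := by
      rw [← measure_union]
      · congr 1
        ext ω
        constructor
        · intro (h : 0 < f ω)
          rcases le_or_gt (f ω) t with h' | h'
          · exact Or.inl ⟨h, h'⟩
          · exact Or.inr h'
        · rintro (⟨h, _⟩ | h)
          · exact h
          · exact lt_trans ht0 h
      · rw [Set.disjoint_left]
        rintro x ⟨hx0, hxt⟩ (hxt' : t < f x)
        exact absurd hxt (not_le.mpr hxt')
      · exact measurableSet_lt measurable_const hf_meas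
    have hps : p = (P {ω | 0 < f ω ∧ f ω ≤ t}).toReal + g t := by
      rw [hp, hsplit, ENNReal.toReal_add (measure_ne_top P _) (measure_ne_top P _)]
    have := hMM t ht0
    rw [hps]
    simp only [hg]
    linarith
  -- integrability of the lower function on (0,T]
  have lb_int : IntegrableOn (fun t => p - B * t ^ β) (Ioc (0:ℝ) T) := by
    apply Integrable.sub (integrableOn_const (C := p) (s := Ioc (0:ℝ) T) (μ := volume) measure_Ioc_lt_top.ne)
    apply Integrable.const_mul
    have h := intervalIntegral.intervalIntegrable_rpow' (a := (0:ℝ)) (b := T) (r := β) (by linarith)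
    rw [intervalIntegrable_iff_integrableOn_Ioc_of_le hTpos.le] at h
    exact h
  -- chain of inequalities
  have step1 : ∫ t in Ioc (0:ℝ) T, g t ≤ I := by
    rw [hlayer]
    refine setIntegral_mono_set g_int (Filter.Eventually.of_forall g_nn) ?_
    exact HasSubset.Subset.eventuallyLE Ioc_subset_Ioi_self
  have step2 : ∫ t in Ioc (0:ℝ) T, (p - B * t ^ β) ≤ ∫ t in Ioc (0:ℝ) T, g t := by
    refine setIntegral_mono_on lb_int (g_int.mono_set Ioc_subset_Ioi_self)
      measurableSet_Ioc g_lb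
  -- compute the lower integral
  have hβ1 : β + 1 = 1 / (1 - α) := by
    rw [hβ]; field_simp; ring
  have hTβ : T ^ β = p / B := by
    rw [hT, ← rpow_mul hpB.le,
      show (1 - α) / α * β = 1 by rw [hβ]; field_simp, rpow_one]
  have hcomp : ∫ t in Ioc (0:ℝ) T, (p - B * t ^ β) = α * p * T := by
    rw [← intervalIntegral.integral_of_le hTpos.le]
    have hβne : β + 1 ≠ 0 := by positivity
    rw [intervalIntegral.integral_sub intervalIntegrable_const
        ((intervalIntegral.intervalIntegrable_rpow' (by linarith)).const_mul B),
      intervalIntegral.integral_const,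
      intervalIntegral.integral_const_mul,
      integral_rpow (Or.inl (by linarith))]
    have h0 : (0:ℝ) ^ (β + 1) = 0 := by
      rw [zero_rpow hβne]
    rw [h0, sub_zero, rpow_add hTpos, hTβ, rpow_one]
    have hβ1' : (β + 1)⁻¹ = 1 - α := by
      rw [hβ1]; field_simp
    rw [div_eq_mul_inv, hβ1']
    field_simp
    ring
  have key : α * p * T ≤ I := by
    calc α * p * T = ∫ t in Ioc (0:ℝ) T, (p - B * t ^ β) := hcomp.symm
    _ ≤ ∫ t in Ioc (0:ℝ) T, g t := step2
    _ ≤ I := step1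
  -- raise to power α
  have hIpow : α ^ α * p / B ^ (1 - α) ≤ I ^ α := by
    have h1 : (α * p * T) ^ α ≤ I ^ α :=
      rpow_le_rpow (by positivity) key hα0.le
    have h2 : (α * p * T) ^ α = α ^ α * p / B ^ (1 - α) := by
      have hTα : T ^ α = p ^ (1 - α) / B ^ (1 - α) := by
        rw [hT, ← rpow_mul hpB.le,
          show (1 - α) / α * α = 1 - α by field_simp, div_rpow hp0.le hB.le]
      have hpp : p ^ α * p ^ (1 - α) = p := by
        rw [← rpow_add hp0]; norm_num
      rw [mul_rpow (by positivity) hTpos.le, mul_rpow hα0.le hp0.le, hTα]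
      field_simp
      linear_combination hpp
    rw [← h2]; exact h1
  have hαα : (0:ℝ) < α ^ α := rpow_pos_of_pos hα0 _
  have hBα : (0:ℝ) < B ^ (1 - α) := rpow_pos_of_pos hB _
  calc p = (B ^ (1 - α) / α ^ α) * (α ^ α * p / B ^ (1 - α)) := by
        field_simp
      _ ≤ (B ^ (1 - α) / α ^ α) * I ^ α :=
        mul_le_mul_of_nonneg_left hIpow (by positivity)
end

section
/- Let (Ω, P) be a probability space, let f : Ω → ℝ be a measurable nonnegative integrable function, and let B > 0 and α ∈ (0,1). Suppose that for every t > 0, P{ω : 0 < f(ω) ≤ t} ≤ B · t^{α/(1−α)}. Then for every u > 0, ∫_{{f>0}} f dP ≥ u · P{ω : f(ω) > 0} − B(1−α) · u^{1/(1−α)}. -/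
open MeasureTheory Real Set

/-- Intermediate inequality in the proof of the key MM-noise property:
for every truncation level `u > 0`, the integral of `f` over `{f > 0}` dominates
`u · P{f > 0} − B(1−α) · u^{1/(1−α)}`. -/
theorem stmt_1 {Ω : Type*} [MeasurableSpace Ω] (P : Measure Ω) [IsProbabilityMeasure P]
    (f : Ω → ℝ) (hf_meas : Measurable f) (hf_nonneg : ∀ ω, 0 ≤ f ω)
    (hf_int : Integrable f P)
    (B α : ℝ) (hB : 0 < B) (hα : α ∈ Set.Ioo (0 : ℝ) 1)
    (hMM : ∀ t > (0 : ℝ),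
      (P {ω | 0 < f ω ∧ f ω ≤ t}).toReal ≤ B * t ^ (α / (1 - α))) :
    ∀ u > (0 : ℝ),
      u * (P {ω | 0 < f ω}).toReal - B * (1 - α) * u ^ (1 / (1 - α)) ≤
        ∫ ω in {ω | 0 < f ω}, f ω ∂P := by
  obtain ⟨hα0, hα1⟩ := hα
  intro u hu
  have h1α : (0:ℝ) < 1 - α := by linarith
  set β := α / (1 - α) with hβ
  have hβ0 : 0 < β := div_pos hα0 h1α
  have hβ1 : β + 1 = 1 / (1 - α) := by
    rw [hβ]
    field_simp
    ring
  set S : Set Ω := {ω | 0 < f ω} with hSdef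
  have hSm : MeasurableSet S := measurableSet_lt measurable_const hf_meas
  set g : ℝ → ℝ := fun t => (P {a | t < f a}).toReal with hg
  have hg_anti : Antitone g := fun s t hst => ENNReal.toReal_mono (measure_ne_top _ _)
      (measure_mono fun a ha => lt_of_le_of_lt hst ha)
  have hg_meas : Measurable g := hg_anti.measurable
  have hg_nonneg : ∀ t, 0 ≤ g t := fun t => ENNReal.toReal_nonneg
  -- Step 1: layer cake on the restricted measure
  have step1 : ∫ ω in S, f ω ∂P = ∫ t in Ioi (0:ℝ), g t := by
    rw [Integrable.integral_eq_integral_meas_lt hf_int.restrict (ae_of_all _ hf_nonneg)]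
    refine setIntegral_congr_fun measurableSet_Ioi (fun t ht => ?_)
    rw [measureReal_def, Measure.restrict_apply (measurableSet_lt measurable_const hf_meas)]
    congr 2
    exact inter_eq_left.mpr (fun a ha => show 0 < f a from lt_trans ht ha)
  -- Step 2: integrability of g on Ioi 0
  have hlint : ∫⁻ t in Ioi (0:ℝ), P {a | t < f a} < ⊤ := by
    rw [← lintegral_eq_lintegral_meas_lt P (ae_of_all _ hf_nonneg) hf_meas.aemeasurable]
    exact hf_int.lintegral_lt_top
  have hg_int : IntegrableOn g (Ioi (0:ℝ)) := by
    refine ⟨hg_meas.aestronglyMeasurable, ?_⟩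
    rw [hasFiniteIntegral_iff_norm]
    calc ∫⁻ t in Ioi (0:ℝ), ENNReal.ofReal ‖g t‖
        = ∫⁻ t in Ioi (0:ℝ), P {a | t < f a} := by
          refine lintegral_congr fun t => ?_
          rw [Real.norm_of_nonneg (hg_nonneg t), ENNReal.ofReal_toReal (measure_ne_top _ _)]
      _ < ⊤ := hlint
  -- Step 3: truncation
  have step3 : ∫ t in Ioc (0:ℝ) u, g t ≤ ∫ t in Ioi (0:ℝ), g t :=
    setIntegral_mono_set hg_int (ae_of_all _ fun t => hg_nonneg t)
      (HasSubset.Subset.eventuallyLE Ioc_subset_Ioi_self)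
  -- Step 4: pointwise lower bound on the tail probability
  have hbound : ∀ t ∈ Ioc (0:ℝ) u, (P S).toReal - B * t ^ β ≤ g t := by
    intro t ht
    have hm2 : MeasurableSet {ω | 0 < f ω ∧ f ω ≤ t} :=
      (measurableSet_lt measurable_const hf_meas).inter
        (measurableSet_le hf_meas measurable_const)
    have hsplit : P S = P {a | t < f a} + P {ω | 0 < f ω ∧ f ω ≤ t} := by
      rw [← measure_union ?_ hm2]
      · congr 1
        apply Set.ext
        intro a
        rw [Set.mem_union]
        show 0 < f a ↔ t < f a ∨ (0 < f a ∧ f a ≤ t)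
        constructor
        · intro h
          rcases le_or_gt (f a) t with h' | h'
          · exact Or.inr ⟨h, h'⟩
          · exact Or.inl h'
        · rintro (h | h)
          · exact lt_trans ht.1 h
          · exact h.1
      · exact Set.disjoint_left.mpr fun a ha hb => absurd hb.2 (not_le.mpr ha)
    have htr : (P S).toReal = g t + (P {ω | 0 < f ω ∧ f ω ≤ t}).toReal := by
      rw [hsplit, ENNReal.toReal_add (measure_ne_top _ _) (measure_ne_top _ _)]
    have := hMM t ht.1
    linarith [htr, this]
  -- Step 5: compute the integral of the lower bound
  have hIIrpow : IntervalIntegrable (fun t : ℝ => B * t ^ β) volume 0 u :=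
    (intervalIntegral.intervalIntegrable_rpow (Or.inl hβ0.le)).const_mul B
  have hlow_int : IntegrableOn (fun t : ℝ => (P S).toReal - B * t ^ β) (Ioc (0:ℝ) u) := by
    have := (intervalIntegrable_const (c := (P S).toReal)).sub hIIrpow
    rw [intervalIntegrable_iff_integrableOn_Ioc_of_le hu.le] at this
    exact this
  have step5 : ∫ t in Ioc (0:ℝ) u, ((P S).toReal - B * t ^ β)
      = u * (P S).toReal - B * (1 - α) * u ^ (1 / (1 - α)) := by
    rw [← intervalIntegral.integral_of_le hu.le,
      intervalIntegral.integral_sub intervalIntegrable_const hIIrpow,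
      intervalIntegral.integral_const, intervalIntegral.integral_const_mul,
      integral_rpow (Or.inl (by linarith : (-1:ℝ) < β)),
      Real.zero_rpow (by positivity : β + 1 ≠ 0)]
    rw [hβ1]
    have h1 : (1:ℝ) / (1 - α) ≠ 0 := by positivity
    field_simp
    ring
  have step4 : ∫ t in Ioc (0:ℝ) u, ((P S).toReal - B * t ^ β)
      ≤ ∫ t in Ioc (0:ℝ) u, g t :=
    setIntegral_mono_on hlow_int (hg_int.mono_set Ioc_subset_Ioi_self)
      measurableSet_Ioc hbound
  rw [step1]
  calc u * (P S).toReal - B * (1 - α) * u ^ (1 / (1 - α))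
      = ∫ t in Ioc (0:ℝ) u, ((P S).toReal - B * t ^ β) := step5.symm
    _ ≤ ∫ t in Ioc (0:ℝ) u, g t := step4
    _ ≤ ∫ t in Ioi (0:ℝ), g t := step3
end

section
/- Let (Ω, P) be a probability space, let f : Ω → ℝ be a measurable nonnegative integrable function, and let B > 0 and α ∈ (0,1). Suppose that for every t > 0, P{ω : 0 < f(ω) ≤ t} ≤ B · t^{α/(1−α)}. Then ∫_{{f>0}} f dP ≥ α · B^{−(1−α)/α} · (P{ω : f(ω) > 0})^{1/α}. -/
open MeasureTheory Real Set

/-- Optimized form of the intermediate inequality in the proof of the key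
MM-noise property: the integral of `f` over `{f > 0}` dominates
`α · B^{−(1−α)/α} · (P{f > 0})^{1/α}`. -/
theorem stmt_2 {Ω : Type*} [MeasurableSpace Ω] (P : Measure Ω) [IsProbabilityMeasure P]
    (f : Ω → ℝ) (hf_meas : Measurable f) (hf_nonneg : ∀ ω, 0 ≤ f ω)
    (hf_int : Integrable f P)
    (B α : ℝ) (hB : 0 < B) (hα : α ∈ Set.Ioo (0 : ℝ) 1)
    (hMM : ∀ t > (0 : ℝ),
      (P {ω | 0 < f ω ∧ f ω ≤ t}).toReal ≤ B * t ^ (α / (1 - α))) :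
    α * B ^ (-(1 - α) / α) * (P {ω | 0 < f ω}).toReal ^ (1 / α) ≤
      ∫ ω in {ω | 0 < f ω}, f ω ∂P := by
  obtain ⟨hα0, hα1⟩ := hα
  have h1α : 0 < 1 - α := by linarith
  set p : ℝ := (P {ω | 0 < f ω}).toReal with hp_def
  have hp_nonneg : 0 ≤ p := ENNReal.toReal_nonneg
  -- The set integral equals the full integral
  have hset : ∫ ω in {ω | 0 < f ω}, f ω ∂P = ∫ ω, f ω ∂P := by
    apply setIntegral_eq_integral_of_forall_compl_eq_zero
    intro ω hω
    simp only [mem_setOf_eq, not_lt] at hω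
    exact le_antisymm hω (hf_nonneg ω)
  rw [hset]
  rcases eq_or_lt_of_le hp_nonneg with hp0 | hp_pos
  · rw [← hp0, Real.zero_rpow (by positivity), mul_zero]
    exact integral_nonneg hf_nonneg
  -- main case : p > 0
  set r : ℝ := α / (1 - α) with hr_def
  have hr_pos : 0 < r := div_pos hα0 h1α
  set u : ℝ := (p / B) ^ ((1 - α) / α) with hu_def
  have hu_pos : 0 < u := Real.rpow_pos_of_pos (div_pos hp_pos hB) _
  -- key identity : B * u ^ r = p
  have hBur : B * u ^ r = p := by
    rw [hu_def, ← Real.rpow_mul (div_pos hp_pos hB).le]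
    have h2 : (1 - α) / α * r = 1 := by
      rw [hr_def]; field_simp
    rw [h2, Real.rpow_one]
    field_simp
  -- pointwise tail bound for t ∈ Ioc 0 u
  have htail : ∀ t ∈ Ioc (0:ℝ) u,
      ENNReal.ofReal (p - B * t ^ r) ≤ P {ω | t < f ω} := by
    intro t ht
    have hle : P {ω | 0 < f ω} ≤ P {ω | t < f ω} + P {ω | 0 < f ω ∧ f ω ≤ t} := by
      refine le_trans (measure_mono ?_) (measure_union_le _ _)
      intro ω hω
      rcases le_or_gt (f ω) t with h | h
      · exact Or.inr ⟨hω, h⟩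
      · exact Or.inl h
    have hfin : P {ω | 0 < f ω ∧ f ω ≤ t} ≠ ⊤ := measure_ne_top _ _
    have hfin2 : P {ω | t < f ω} ≠ ⊤ := measure_ne_top _ _
    have hle' : p - (P {ω | 0 < f ω ∧ f ω ≤ t}).toReal ≤ (P {ω | t < f ω}).toReal := by
      have := ENNReal.toReal_mono (by finiteness) hle
      rw [ENNReal.toReal_add hfin2 hfin] at this
      linarith
    calc ENNReal.ofReal (p - B * t ^ r)
        ≤ ENNReal.ofReal ((P {ω | t < f ω}).toReal) := by
          apply ENNReal.ofReal_le_ofReal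
          have := hMM t ht.1
          linarith [hle', this]
      _ = P {ω | t < f ω} := ENNReal.ofReal_toReal hfin2
  -- nonnegativity of the integrand on Ioc 0 u
  have hnn : ∀ t ∈ Ioc (0:ℝ) u, 0 ≤ p - B * t ^ r := by
    intro t ht
    have : t ^ r ≤ u ^ r := Real.rpow_le_rpow ht.1.le ht.2 hr_pos.le
    nlinarith [hBur]
  -- integrability of the integrand on Ioc 0 u
  have hInt : IntegrableOn (fun t => p - B * t ^ r) (Ioc 0 u) := by
    have h1 : IntervalIntegrable (fun t : ℝ => t ^ r) volume 0 u :=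
      intervalIntegral.intervalIntegrable_rpow (Or.inl hr_pos.le)
    have h2 : IntervalIntegrable (fun t : ℝ => p - B * t ^ r) volume 0 u :=
      (intervalIntegrable_const).sub (h1.const_mul B)
    exact (intervalIntegrable_iff_integrableOn_Ioc_of_le hu_pos.le).mp h2
  -- value of the real integral
  have hval : ∫ t in Ioc (0:ℝ) u, (p - B * t ^ r) = p * u - B * (1 - α) * u ^ (1 / (1 - α)) := by
    rw [← intervalIntegral.integral_of_le hu_pos.le]
    rw [intervalIntegral.integral_sub intervalIntegrable_const
      ((intervalIntegral.intervalIntegrable_rpow (Or.inl hr_pos.le)).const_mul B)]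
    rw [intervalIntegral.integral_const, intervalIntegral.integral_const_mul,
      integral_rpow (Or.inl (by linarith))]
    have hr1 : r + 1 = 1 / (1 - α) := by rw [hr_def]; field_simp; ring
    rw [Real.zero_rpow (by positivity), hr1]
    have h1 : (1:ℝ) / (1 / (1 - α)) = 1 - α := by field_simp
    field_simp
    ring
  -- lintegral chain
  have hchain : ENNReal.ofReal (p * u - B * (1 - α) * u ^ (1 / (1 - α))) ≤
      ∫⁻ ω, ENNReal.ofReal (f ω) ∂P := by
    rw [lintegral_eq_lintegral_meas_lt P (Filter.Eventually.of_forall hf_nonneg) hf_meas.aemeasurable]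
    calc ENNReal.ofReal (p * u - B * (1 - α) * u ^ (1 / (1 - α)))
        = ENNReal.ofReal (∫ t in Ioc (0:ℝ) u, (p - B * t ^ r)) := by rw [hval]
      _ = ∫⁻ t in Ioc (0:ℝ) u, ENNReal.ofReal (p - B * t ^ r) := by
          apply ofReal_integral_eq_lintegral_ofReal hInt
          exact (ae_restrict_iff' measurableSet_Ioc).2 (Filter.Eventually.of_forall hnn)
      _ ≤ ∫⁻ t in Ioc (0:ℝ) u, P {ω | t < f ω} := setLIntegral_mono' measurableSet_Ioc htail
      _ ≤ ∫⁻ t in Ioi (0:ℝ), P {ω | t < f ω} := lintegral_mono_set Ioc_subset_Ioi_self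
  -- convert to real integral
  have hlint_ne : ∫⁻ ω, ENNReal.ofReal (f ω) ∂P ≠ ⊤ := hf_int.lintegral_lt_top.ne
  have hfinal : p * u - B * (1 - α) * u ^ (1 / (1 - α)) ≤ ∫ ω, f ω ∂P := by
    have := (ENNReal.ofReal_le_iff_le_toReal hlint_ne).mp hchain
    rwa [← integral_eq_lintegral_of_nonneg_ae (Filter.Eventually.of_forall hf_nonneg)
      hf_int.aestronglyMeasurable] at this
  refine le_trans (le_of_eq ?_) hfinal
  -- final algebra
  have hu1 : u ^ (1 / (1 - α)) = (p / B) ^ (1 / α) := by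
    rw [hu_def, ← Real.rpow_mul (div_pos hp_pos hB).le]
    congr 1
    field_simp
  have hpB : (p / B) ^ ((1 - α) / α) = p ^ ((1 - α) / α) / B ^ ((1 - α) / α) :=
    Real.div_rpow hp_nonneg hB.le _
  have hpB2 : (p / B) ^ (1 / α) = p ^ (1 / α) / B ^ (1 / α) :=
    Real.div_rpow hp_nonneg hB.le _
  have hp1 : p * p ^ ((1 - α) / α) = p ^ (1 / α) := by
    rw [← Real.rpow_one_add' hp_nonneg (by positivity)]
    congr 1
    field_simp
    ring
  have hB1 : B / B ^ (1 / α) = B ^ (-(1 - α) / α) := by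
    rw [eq_comm, eq_div_iff (by positivity), ← Real.rpow_add hB]
    have h3 : -(1 - α) / α + 1 / α = 1 := by field_simp; ring
    rw [h3, Real.rpow_one]
  have hB2 : p ^ ((1 - α) / α) / B ^ ((1 - α) / α) = p ^ ((1 - α) / α) * B ^ (-(1 - α) / α) := by
    rw [div_eq_mul_inv, ← Real.rpow_neg hB.le]
    congr 1
    ring
  rw [hu_def, hu1, hpB, hpB2, hB2]
  have : p * (p ^ ((1 - α) / α) * B ^ (-(1 - α) / α)) = p ^ (1 / α) * B ^ (-(1 - α) / α) := by
    rw [← mul_assoc, hp1]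
  rw [this]
  have hBB : B * (1 - α) * (p ^ (1 / α) / B ^ (1 / α)) =
      (1 - α) * (p ^ (1 / α) * B ^ (-(1 - α) / α)) := by
    rw [← hB1]; ring
  rw [hBB]
  ring
end

section
/- Let (X, P) be a probability space, let s > 1 with conjugate exponent t = s/(s−1), and let g, f, m : X → ℝ be measurable functions with g ≥ 0, m ≥ 0, f ≥ 0, and f integrable. Assume that for every x ∈ X: (i) g(x) ≤ m(x), and (ii) g(x) ≤ (f(x))^{1/s}. Then ∫ g dP ≤ (P{x : m(x) > 0})^{1/t} · (∫ f dP)^{1/s}. -/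
open MeasureTheory Real Set

/-- Abstract form of Theorem 5.1 (multi-class H-consistency bound under the model
margin): if `g ≤ m` and `g ≤ f^{1/s}` pointwise, then
`∫ g ≤ (P{m > 0})^{1/t} · (∫ f)^{1/s}` with `t` the conjugate exponent of `s`. -/
theorem stmt_4 {X : Type*} [MeasurableSpace X] (P : Measure X) [IsProbabilityMeasure P]
    (s t : ℝ) (hs : 1 < s) (ht : t = s / (s - 1))
    (g f m : X → ℝ)
    (hg_meas : Measurable g) (hf_meas : Measurable f) (hm_meas : Measurable m)
    (hg_nonneg : ∀ x, 0 ≤ g x) (hm_nonneg : ∀ x, 0 ≤ m x) (hf_nonneg : ∀ x, 0 ≤ f x)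
    (hf_int : Integrable f P)
    (hgm : ∀ x, g x ≤ m x)
    (hgf : ∀ x, g x ≤ f x ^ (1 / s)) :
    ∫ x, g x ∂P ≤
      (P {x | 0 < m x}).toReal ^ (1 / t) * (∫ x, f x ∂P) ^ (1 / s) := by
  have hs0 : (0:ℝ) < s := lt_trans one_pos hs
  have hconj : s.HolderConjugate t :=
    (Real.holderConjugate_iff_eq_conjExponent hs).2 ht
  have hconj' : t.HolderConjugate s := hconj.symm
  set A : Set X := {x | 0 < m x} with hA
  have hA_meas : MeasurableSet A := measurableSet_lt measurable_const hm_meas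
  -- ENNReal versions
  set φ : X → ENNReal := A.indicator (fun _ => 1) with hφ
  set ψ : X → ENNReal := fun x => ENNReal.ofReal (f x ^ (1 / s)) with hψ
  have hφ_meas : Measurable φ := measurable_const.indicator hA_meas
  have ht0 : (0:ℝ) < t := hconj'.pos
  have hψ_meas : Measurable ψ :=
    (hf_meas.pow measurable_const).ennreal_ofReal
  -- pointwise bound
  have hpt : ∀ x, ENNReal.ofReal (g x) ≤ (φ * ψ) x := by
    intro x
    by_cases hx : x ∈ A
    · simp only [Pi.mul_apply, hφ, indicator_of_mem hx, one_mul, hψ]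
      exact ENNReal.ofReal_le_ofReal (hgf x)
    · have hm0 : m x = 0 := le_antisymm (not_lt.1 hx) (hm_nonneg x)
      have hg0 : g x = 0 := le_antisymm (hm0 ▸ hgm x) (hg_nonneg x)
      simp [hg0]
  -- Hölder
  have holder := ENNReal.lintegral_mul_le_Lp_mul_Lq P hconj' hφ_meas.aemeasurable
      hψ_meas.aemeasurable
  have hφ_int : ∫⁻ x, φ x ^ t ∂P = P A := by
    have : ∀ x, φ x ^ t = A.indicator (fun _ => 1) x := by
      intro x
      by_cases hx : x ∈ A <;>
        simp [hφ, hx, ENNReal.zero_rpow_of_pos hconj'.pos]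
    simp only [this]
    exact lintegral_indicator_one hA_meas
  have hψ_int : ∫⁻ x, ψ x ^ s ∂P = ENNReal.ofReal (∫ x, f x ∂P) := by
    have h1 : ∀ x, ψ x ^ s = ENNReal.ofReal (f x) := by
      intro x
      show ENNReal.ofReal (f x ^ (1 / s)) ^ s = ENNReal.ofReal (f x)
      rw [ENNReal.ofReal_rpow_of_nonneg (Real.rpow_nonneg (hf_nonneg x) _) hs0.le,
        ← Real.rpow_mul (hf_nonneg x), one_div, inv_mul_cancel₀ hs0.ne', Real.rpow_one]
    simp only [h1]
    rw [← ofReal_integral_eq_lintegral_ofReal hf_int (Filter.Eventually.of_forall hf_nonneg)]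
  -- RHS in ENNReal
  have key : ∫⁻ x, ENNReal.ofReal (g x) ∂P ≤
      (P A) ^ (1 / t) * (ENNReal.ofReal (∫ x, f x ∂P)) ^ (1 / s) := by
    calc ∫⁻ x, ENNReal.ofReal (g x) ∂P ≤ ∫⁻ x, (φ * ψ) x ∂P :=
          lintegral_mono hpt
      _ ≤ (∫⁻ x, φ x ^ t ∂P) ^ (1/t) * (∫⁻ x, ψ x ^ s ∂P) ^ (1/s) := holder
      _ = (P A) ^ (1 / t) * (ENNReal.ofReal (∫ x, f x ∂P)) ^ (1 / s) := by
          rw [hφ_int, hψ_int]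
  -- integrability of g
  have hg_int : Integrable g P := by
    refine Integrable.mono' (hf_int.add (integrable_const 1)) hg_meas.aestronglyMeasurable
      (Filter.Eventually.of_forall fun x => ?_)
    simp only [Pi.add_apply]
    rw [Real.norm_of_nonneg (hg_nonneg x)]
    refine (hgf x).trans ?_
    rcases le_or_gt (f x) 1 with h | h
    · refine (Real.rpow_le_one (hf_nonneg x) h (by positivity)).trans ?_
      have := hf_nonneg x; linarith
    · have h1 : f x ^ (1 / s) ≤ f x ^ (1:ℝ) :=
        Real.rpow_le_rpow_of_exponent_le h.le (by rw [div_le_one hs0]; linarith)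
      rw [Real.rpow_one] at h1
      linarith
  -- convert back
  have hlhs : ∫ x, g x ∂P = (∫⁻ x, ENNReal.ofReal (g x) ∂P).toReal := by
    rw [integral_eq_lintegral_of_nonneg_ae (Filter.Eventually.of_forall hg_nonneg)
      hg_meas.aestronglyMeasurable]
  rw [hlhs]
  have hfin : (P A) ^ (1 / t) * (ENNReal.ofReal (∫ x, f x ∂P)) ^ (1 / s) ≠ ⊤ := by
    apply ENNReal.mul_ne_top
    · exact ENNReal.rpow_ne_top_of_nonneg (by positivity) (measure_ne_top P A)
    · exact ENNReal.rpow_ne_top_of_nonneg (by positivity) ENNReal.ofReal_ne_top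
  refine (ENNReal.toReal_le_toReal ?_ hfin).2 key |>.trans_eq ?_
  · exact ne_top_of_le_ne_top hfin key
  · rw [ENNReal.toReal_mul, ← ENNReal.toReal_rpow, ← ENNReal.toReal_rpow,
      ENNReal.toReal_ofReal (integral_nonneg hf_nonneg)]
end

section
/- Let (X, P) be a probability space, let s > 1 with conjugate exponent t = s/(s−1), let α ∈ (0,1) and B > 0, and let g, f, m : X → ℝ be measurable functions with g ≥ 0, m ≥ 0, f ≥ 0, f integrable and m integrable. Assume: (i) g(x) ≤ m(x) and g(x) ≤ (f(x))^{1/s} for every x ∈ X; (ii) for every τ > 0, P{x : 0 < m(x) ≤ τ} ≤ B · τ^{α/(1−α)}; and (iii) ∫ g dP = ∫_{{m>0}} m dP. Then, with c = B^{1−α}/α^α, ∫ g dP ≤ c^{(s−1)/(s−α(s−1))} · (∫ f dP)^{1/(s−α(s−1))}. -/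
open MeasureTheory Real Set

/-- Abstract form of Theorem 5.2 (enhanced multi-class H-consistency bound under
Model Margin noise): under the pointwise bounds `g ≤ m`, `g ≤ f^{1/s}`, the MM noise
tail condition on `m`, and `∫ g = ∫_{m>0} m`, we have
`∫ g ≤ c^{(s−1)/(s−α(s−1))} · (∫ f)^{1/(s−α(s−1))}` with `c = B^{1−α}/α^α`. -/
theorem stmt_5 {X : Type*} [MeasurableSpace X] (P : Measure X) [IsProbabilityMeasure P]
    (s t : ℝ) (hs : 1 < s) (ht : t = s / (s - 1))
    (B α : ℝ) (hB : 0 < B) (hα : α ∈ Set.Ioo (0 : ℝ) 1)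
    (g f m : X → ℝ)
    (hg_meas : Measurable g) (hf_meas : Measurable f) (hm_meas : Measurable m)
    (hg_nonneg : ∀ x, 0 ≤ g x) (hm_nonneg : ∀ x, 0 ≤ m x) (hf_nonneg : ∀ x, 0 ≤ f x)
    (hf_int : Integrable f P) (hm_int : Integrable m P)
    (hgm : ∀ x, g x ≤ m x)
    (hgf : ∀ x, g x ≤ f x ^ (1 / s))
    (hMM : ∀ τ > (0 : ℝ),
      (P {x | 0 < m x ∧ m x ≤ τ}).toReal ≤ B * τ ^ (α / (1 - α)))
    (hbayes : ∫ x, g x ∂P = ∫ x in {x | 0 < m x}, m x ∂P) :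
    ∫ x, g x ∂P ≤
      (B ^ (1 - α) / α ^ α) ^ ((s - 1) / (s - α * (s - 1))) *
        (∫ x, f x ∂P) ^ (1 / (s - α * (s - 1))) := by
  obtain ⟨hα1, hα2⟩ := hα
  have hs0 : (0:ℝ) < s := lt_trans one_pos hs
  have hs1 : (0:ℝ) < s - 1 := by linarith
  have h1α : (0:ℝ) < 1 - α := by linarith
  have conj : s.HolderConjugate t := (Real.holderConjugate_iff_eq_conjExponent hs).2 ht
  have ht0 : (0:ℝ) < t := conj.symm.pos
  have hst : 1/s + 1/t = 1 := by
    have := conj.inv_add_inv_eq_one; rw [one_div, one_div]; exact this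
  set A : Set X := {x | 0 < m x} with hA_def
  have hA : MeasurableSet A := measurableSet_lt measurable_const hm_meas
  set I : ℝ := ∫ x, g x ∂P with hI_def
  set F1 : ℝ := ∫ x, f x ∂P with hF1_def
  have hF1_nonneg : 0 ≤ F1 := integral_nonneg hf_nonneg
  set c : ℝ := B ^ (1 - α) / α ^ α with hc_def
  have hc_pos : 0 < c := div_pos (Real.rpow_pos_of_pos hB _) (Real.rpow_pos_of_pos hα1 _)
  set D : ℝ := s - α * (s - 1) with hD_def
  have hD_pos : 0 < D := by nlinarith
  -- trivial case I = 0
  have hI_nonneg : 0 ≤ I := integral_nonneg hg_nonneg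
  rcases eq_or_lt_of_le hI_nonneg with hI0 | hIpos
  · rw [← hI0]
    exact mul_nonneg (Real.rpow_nonneg hc_pos.le _) (Real.rpow_nonneg hF1_nonneg _)
  -- g is integrable
  have hg_int : Integrable g P := by
    refine hm_int.mono' hg_meas.aestronglyMeasurable (ae_of_all _ fun x => ?_)
    rw [Real.norm_of_nonneg (hg_nonneg x)]; exact hgm x
  -- ∫ g  = ∫_A g
  have hIAg : I = ∫ x in A, g x ∂P := by
    have hzero : ∫ x in Aᶜ, g x ∂P = 0 := by
      refine integral_eq_zero_of_ae ?_
      filter_upwards [ae_restrict_mem hA.compl] with x hx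
      have hm0 : m x = 0 := le_antisymm (not_lt.1 hx) (hm_nonneg x)
      show g x = (0:ℝ)
      exact le_antisymm (by rw [← hm0]; exact hgm x) (hg_nonneg x)
    have := integral_add_compl hA hg_int
    rw [hzero, add_zero] at this
    exact this.symm
  have hIAm : I = ∫ x in A, m x ∂P := hbayes
  -- positivity of P A
  have hPA_ne_top : P A ≠ ⊤ := measure_ne_top P A
  set pA : ℝ := (P A).toReal with hpA_def
  have hpA_nonneg : 0 ≤ pA := ENNReal.toReal_nonneg
  have hpA_pos : 0 < pA := by
    rcases eq_or_ne (P A) 0 with h0 | h0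
    · exfalso
      have : P.restrict A = 0 := Measure.restrict_eq_zero.2 h0
      rw [hIAm, this, integral_zero_measure] at hIpos
      exact lt_irrefl _ hIpos
    · exact ENNReal.toReal_pos h0 hPA_ne_top
  -- Fa := ∫_A f > 0
  set Fa : ℝ := ∫ x in A, f x ∂P with hFa_def
  have hFa_nonneg : 0 ≤ Fa := integral_nonneg fun x => hf_nonneg x
  have hFa_le_F1 : Fa ≤ F1 := setIntegral_le_integral hf_int (ae_of_all _ hf_nonneg)
  have hFa_pos : 0 < Fa := by
    rcases eq_or_lt_of_le hFa_nonneg with h0 | h0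
    · exfalso
      have hf0 : f =ᵐ[P.restrict A] 0 :=
        (integral_eq_zero_iff_of_nonneg hf_nonneg hf_int.restrict).1 h0.symm
      have hg0 : g ≤ᵐ[P.restrict A] 0 := by
        filter_upwards [hf0] with x hx
        rw [Pi.zero_apply] at hx
        have hthis := hgf x
        rw [hx, Real.zero_rpow (by positivity : (1:ℝ)/s ≠ 0)] at hthis
        exact hthis
      have : ∫ x in A, g x ∂P ≤ 0 := integral_nonpos_of_ae hg0
      rw [← hIAg] at this; linarith
    · exact h0
  ---------------------------------------------------------------
  -- Step 1: tail bound  pA ≤ c * I ^ α  via layer cake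
  ---------------------------------------------------------------
  set β : ℝ := α / (1 - α) with hβ_def
  have hβ_pos : 0 < β := div_pos hα1 h1α
  set T : ℝ := (pA / B) ^ ((1 - α) / α) with hT_def
  have hpAB_pos : 0 < pA / B := div_pos hpA_pos hB
  have hT_pos : 0 < T := Real.rpow_pos_of_pos hpAB_pos _
  set ν : Measure X := P.restrict A with hν_def
  have hset : ∀ r : ℝ, MeasurableSet {a | r < m a} := fun r =>
    measurableSet_lt measurable_const hm_meas
  set φ : ℝ → ℝ := fun r => (ν {a | r < m a}).toReal with hφ_def
  have hφ_meas : Measurable φ := by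
    refine Measurable.ennreal_toReal ?_
    exact Antitone.measurable fun u v huv => measure_mono fun a ha => lt_of_le_of_lt huv ha
  have hφ_nonneg : ∀ r, 0 ≤ φ r := fun r => ENNReal.toReal_nonneg
  have hlayer : ∫ x in A, m x ∂P = ∫ r in Ioi (0:ℝ), φ r :=
    Integrable.integral_eq_integral_meas_lt hm_int.restrict (ae_of_all _ hm_nonneg)
  have hlint : ∫⁻ r in Ioi (0:ℝ), ν {a | r < m a} < ⊤ := by
    rw [← lintegral_eq_lintegral_meas_lt ν (ae_of_all _ hm_nonneg) hm_meas.aemeasurable]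
    exact hm_int.restrict.lintegral_lt_top
  have hφ_int : IntegrableOn φ (Ioi (0:ℝ)) := by
    refine ⟨hφ_meas.aestronglyMeasurable, ?_⟩
    refine lt_of_le_of_lt (lintegral_mono fun r => ?_) hlint
    rw [Real.enorm_eq_ofReal (hφ_nonneg r)]
    exact ENNReal.ofReal_toReal_le
  have hφ_ge : ∀ r ∈ Ioc (0:ℝ) T, pA - B * r ^ β ≤ φ r := by
    intro r hr
    have hν_app : ν {a | r < m a} = P ({a | r < m a} ∩ A) := Measure.restrict_apply (hset r)
    have hsub : A ⊆ ({a | r < m a} ∩ A) ∪ {x | 0 < m x ∧ m x ≤ r} := by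
      intro x hx
      by_cases hc : r < m x
      · exact Or.inl ⟨hc, hx⟩
      · exact Or.inr ⟨hx, not_lt.1 hc⟩
    have h1 : P A ≤ P ({a | r < m a} ∩ A) + P {x | 0 < m x ∧ m x ≤ r} :=
      le_trans (measure_mono hsub) (measure_union_le _ _)
    have h2 : pA ≤ φ r + (P {x | 0 < m x ∧ m x ≤ r}).toReal := by
      rw [hφ_def]; simp only [hν_app]
      rw [← ENNReal.toReal_add (measure_ne_top _ _) (measure_ne_top _ _)]
      exact ENNReal.toReal_mono (by
        exact ENNReal.add_ne_top.2 ⟨measure_ne_top _ _, measure_ne_top _ _⟩) h1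
    have h3 := hMM r hr.1
    linarith
  have hpoly_int : IntegrableOn (fun r : ℝ => pA - B * r ^ β) (Ioc (0:ℝ) T) := by
    have h1 : IntervalIntegrable (fun r : ℝ => r ^ β) volume 0 T :=
      intervalIntegral.intervalIntegrable_rpow' (by linarith)
    have h2 : IntervalIntegrable (fun r : ℝ => pA - B * r ^ β) volume 0 T :=
      intervalIntegrable_const.sub (h1.const_mul B)
    exact (intervalIntegrable_iff_integrableOn_Ioc_of_le hT_pos.le).1 h2
  have hcomp : ∫ r in Ioc (0:ℝ) T, (pA - B * r ^ β) = α * (T * pA) := by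
    have hTβ : T ^ β = pA / B := by
      rw [hT_def, ← Real.rpow_mul hpAB_pos.le]
      rw [show (1 - α) / α * β = 1 by rw [hβ_def]; field_simp, Real.rpow_one]
    have h1 : IntervalIntegrable (fun r : ℝ => r ^ β) volume 0 T :=
      intervalIntegral.intervalIntegrable_rpow' (by linarith)
    rw [← intervalIntegral.integral_of_le hT_pos.le]
    rw [intervalIntegral.integral_sub intervalIntegrable_const (h1.const_mul B),
      intervalIntegral.integral_const, intervalIntegral.integral_const_mul,
      integral_rpow (Or.inl (by linarith : (-1:ℝ) < β))]
    rw [Real.zero_rpow (by positivity : β + 1 ≠ 0)]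
    have hTβ1 : T ^ (β + 1) = (pA / B) * T := by
      rw [Real.rpow_add hT_pos, Real.rpow_one, hTβ]
    rw [hTβ1]
    have hβ1 : β + 1 = 1 / (1 - α) := by rw [hβ_def]; field_simp; ring
    rw [hβ1]
    rw [smul_eq_mul]
    field_simp <;> ring
  have htail : α * (T * pA) ≤ I := by
    calc α * (T * pA) = ∫ r in Ioc (0:ℝ) T, (pA - B * r ^ β) := hcomp.symm
    _ ≤ ∫ r in Ioc (0:ℝ) T, φ r :=
        setIntegral_mono_on hpoly_int (hφ_int.mono_set Ioc_subset_Ioi_self)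
          measurableSet_Ioc hφ_ge
    _ ≤ ∫ r in Ioi (0:ℝ), φ r :=
        setIntegral_mono_set hφ_int (ae_of_all _ hφ_nonneg)
          (HasSubset.Subset.eventuallyLE Ioc_subset_Ioi_self)
    _ = ∫ x in A, m x ∂P := hlayer.symm
    _ = I := hIAm.symm
  have hpA_le : pA ≤ c * I ^ α := by
    have hTpA : T * pA = B * (pA / B) ^ (1 / α) := by
      rw [show (1:ℝ) / α = (1 - α) / α + 1 by field_simp; ring]
      rw [Real.rpow_add hpAB_pos, Real.rpow_one, ← hT_def]
      field_simp <;> ring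
    have hq : (pA / B) ^ (1 / α) ≤ I / (α * B) := by
      rw [le_div_iff₀ (by positivity)]
      rw [hTpA] at htail
      nlinarith [htail]
    have hq2 : pA / B ≤ (I / (α * B)) ^ α := by
      have h := Real.rpow_le_rpow (Real.rpow_nonneg hpAB_pos.le _) hq hα1.le
      rwa [← Real.rpow_mul hpAB_pos.le, one_div_mul_cancel hα1.ne', Real.rpow_one] at h
    have heq : B * (I / (α * B)) ^ α = c * I ^ α := by
      rw [Real.div_rpow hIpos.le (by positivity), Real.mul_rpow hα1.le hB.le, hc_def,
        Real.rpow_sub hB, Real.rpow_one]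
      have h1 : (0:ℝ) < α ^ α := Real.rpow_pos_of_pos hα1 _
      have h2 : (0:ℝ) < B ^ α := Real.rpow_pos_of_pos hB _
      field_simp
    calc pA ≤ B * (I / (α * B)) ^ α := by
          rw [div_le_iff₀ hB] at hq2; linarith
    _ = c * I ^ α := heq
  ---------------------------------------------------------------
  -- Step 2: Hölder (via Young)  I ≤ Fa^{1/s} * pA^{1/t}
  ---------------------------------------------------------------
  set lam : ℝ := (Fa / pA) ^ (1 / (s * t)) with hlam_def
  have hFaPA_pos : 0 < Fa / pA := div_pos hFa_pos hpA_pos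
  have hlam_pos : 0 < lam := Real.rpow_pos_of_pos hFaPA_pos _
  have hyoung : ∀ x, f x ^ (1 / s) ≤ f x / (s * lam ^ s) + lam ^ t / t := by
    intro x
    have h := Real.young_inequality_of_nonneg (a := f x ^ (1/s) / lam) (b := lam)
      (div_nonneg (Real.rpow_nonneg (hf_nonneg x) (1/s)) hlam_pos.le) hlam_pos.le conj
    rw [div_mul_cancel₀ _ hlam_pos.ne'] at h
    have ha : (f x ^ (1/s) / lam) ^ s = f x / lam ^ s := by
      rw [Real.div_rpow (Real.rpow_nonneg (hf_nonneg x) _) hlam_pos.le,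
        ← Real.rpow_mul (hf_nonneg x), one_div_mul_cancel hs0.ne', Real.rpow_one]
    rw [ha] at h
    calc f x ^ (1/s) ≤ f x / lam ^ s / s + lam ^ t / t := h
    _ = f x / (s * lam ^ s) + lam ^ t / t := by rw [div_div, mul_comm]
  have hfs_int : Integrable (fun x => f x ^ (1/s)) P := by
    refine ((integrable_const (1:ℝ)).add hf_int).mono'
      ((hf_meas.pow measurable_const).aestronglyMeasurable) (ae_of_all _ fun x => ?_)
    rw [Real.norm_of_nonneg (Real.rpow_nonneg (hf_nonneg x) _)]
    show f x ^ (1/s) ≤ 1 + f x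
    rcases le_or_gt (f x) 1 with h1 | h1
    · have : f x ^ (1/s) ≤ 1 := Real.rpow_le_one (hf_nonneg x) h1 (by positivity)
      have hfx := hf_nonneg x; linarith
    · have : f x ^ (1/s) ≤ f x ^ (1:ℝ) :=
        Real.rpow_le_rpow_of_exponent_le h1.le (by
          rw [div_le_one hs0]; linarith)
      rw [Real.rpow_one] at this; linarith
  have hholder : I ≤ Fa ^ (1/s) * pA ^ (1/t) := by
    have hstep1 : I ≤ ∫ x in A, f x ^ (1/s) ∂P := by
      rw [hIAg]
      exact integral_mono hg_int.restrict hfs_int.restrict hgf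
    have hstep2 : ∫ x in A, f x ^ (1/s) ∂P ≤
        ∫ x in A, (f x / (s * lam ^ s) + lam ^ t / t) ∂P := by
      refine integral_mono hfs_int.restrict ?_ hyoung
      exact (hf_int.restrict.div_const _).add (integrable_const _)
    have hstep3 : ∫ x in A, (f x / (s * lam ^ s) + lam ^ t / t) ∂P =
        Fa / (s * lam ^ s) + pA * (lam ^ t / t) := by
      rw [integral_add (hf_int.restrict.div_const _) (integrable_const _)]
      rw [integral_div, setIntegral_const, smul_eq_mul]
      rfl
    -- rpow algebra
    have hls : lam ^ s = Fa ^ (1/t) / pA ^ (1/t) := by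
      rw [hlam_def, ← Real.rpow_mul hFaPA_pos.le,
        show 1 / (s * t) * s = 1 / t by field_simp <;> ring,
        Real.div_rpow hFa_nonneg hpA_nonneg]
    have hlt : lam ^ t = Fa ^ (1/s) / pA ^ (1/s) := by
      rw [hlam_def, ← Real.rpow_mul hFaPA_pos.le,
        show 1 / (s * t) * t = 1 / s by field_simp <;> ring,
        Real.div_rpow hFa_nonneg hpA_nonneg]
    have ha : Fa ^ (1/s) * Fa ^ (1/t) = Fa := by
      rw [← Real.rpow_add hFa_pos, hst, Real.rpow_one]
    have hp : pA ^ (1/s) * pA ^ (1/t) = pA := by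
      rw [← Real.rpow_add hpA_pos, hst, Real.rpow_one]
    have hFas : 0 < Fa ^ (1/s) := Real.rpow_pos_of_pos hFa_pos _
    have hFat : 0 < Fa ^ (1/t) := Real.rpow_pos_of_pos hFa_pos _
    have hpAs : 0 < pA ^ (1/s) := Real.rpow_pos_of_pos hpA_pos _
    have hpAt : 0 < pA ^ (1/t) := Real.rpow_pos_of_pos hpA_pos _
    have e1 : Fa / (s * lam ^ s) = Fa ^ (1/s) * pA ^ (1/t) * (1/s) := by
      conv_lhs => rw [← ha]
      rw [hls]
      rw [div_eq_iff (by positivity : s * (Fa ^ (1/t) / pA ^ (1/t)) ≠ 0)]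
      field_simp
    have e2 : pA * (lam ^ t / t) = Fa ^ (1/s) * pA ^ (1/t) * (1/t) := by
      conv_lhs => rw [← hp]
      rw [hlt]
      field_simp
    have hsum : Fa / (s * lam ^ s) + pA * (lam ^ t / t) = Fa ^ (1/s) * pA ^ (1/t) := by
      rw [e1, e2, ← mul_add, hst, mul_one]
    calc I ≤ ∫ x in A, f x ^ (1/s) ∂P := hstep1
    _ ≤ ∫ x in A, (f x / (s * lam ^ s) + lam ^ t / t) ∂P := hstep2
    _ = Fa / (s * lam ^ s) + pA * (lam ^ t / t) := hstep3
    _ = Fa ^ (1/s) * pA ^ (1/t) := hsum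
  ---------------------------------------------------------------
  -- Step 3: combine
  ---------------------------------------------------------------
  have hmain : I ≤ c ^ (1/t) * F1 ^ (1/s) * I ^ (α / t) := by
    have h1 : Fa ^ (1/s) ≤ F1 ^ (1/s) :=
      Real.rpow_le_rpow hFa_nonneg hFa_le_F1 (by positivity)
    have h2 : pA ^ (1/t) ≤ (c * I ^ α) ^ (1/t) :=
      Real.rpow_le_rpow hpA_nonneg hpA_le (by positivity)
    have h3 : (c * I ^ α) ^ (1/t) = c ^ (1/t) * I ^ (α / t) := by
      rw [Real.mul_rpow hc_pos.le (Real.rpow_nonneg hI_nonneg _),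
        ← Real.rpow_mul hI_nonneg]
      ring_nf
    calc I ≤ Fa ^ (1/s) * pA ^ (1/t) := hholder
    _ ≤ F1 ^ (1/s) * ((c * I ^ α) ^ (1/t)) :=
        mul_le_mul h1 h2 (Real.rpow_nonneg hpA_nonneg _) (Real.rpow_nonneg hF1_nonneg _)
    _ = c ^ (1/t) * F1 ^ (1/s) * I ^ (α / t) := by rw [h3]; ring
  have hkey : I ^ (D / s) ≤ c ^ (1/t) * F1 ^ (1/s) := by
    have hmul := mul_le_mul_of_nonneg_right hmain
      (Real.rpow_nonneg hI_nonneg (-(α/t)))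
    have hL : I * I ^ (-(α/t)) = I ^ (D / s) := by
      nth_rewrite 1 [show I = I ^ (1:ℝ) by rw [Real.rpow_one]]
      rw [← Real.rpow_add hIpos]
      congr 1
      rw [ht]
      field_simp
      ring
    have hR : c ^ (1/t) * F1 ^ (1/s) * I ^ (α/t) * I ^ (-(α/t)) =
        c ^ (1/t) * F1 ^ (1/s) := by
      rw [mul_assoc, ← Real.rpow_add hIpos, add_neg_cancel, Real.rpow_zero, mul_one]
    rw [hL, hR] at hmul
    exact hmul
  have hfinal := Real.rpow_le_rpow (Real.rpow_nonneg hI_nonneg _) hkey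
    (by positivity : (0:ℝ) ≤ s / D)
  rw [← Real.rpow_mul hI_nonneg, show D / s * (s / D) = (1:ℝ) by field_simp <;> ring,
    Real.rpow_one] at hfinal
  have hRHS : (c ^ (1/t) * F1 ^ (1/s)) ^ (s / D) =
      c ^ ((s-1)/D) * F1 ^ (1/D) := by
    rw [Real.mul_rpow (Real.rpow_nonneg hc_pos.le _) (Real.rpow_nonneg hF1_nonneg _),
      ← Real.rpow_mul hc_pos.le, ← Real.rpow_mul hF1_nonneg]
    congr 2
    · rw [ht]; field_simp <;> ring
    · field_simp <;> ring
  rw [hRHS] at hfinal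
  exact hfinal
end
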